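/- Let J₁, J₂, J₃ be complex-linear endomorphisms of a complex vector space W satisfying the quaternion relations, and for ζ ∈ ℂ set J(ζ) = c₁(ζ)J₁ + c₂(ζ)J₂ + c₃(ζ)J₃ where c(ζ) is the stereographic unit vector. Then for every v ∈ W with J₃ v = −i v, one has J(ζ)(1 + ζJ₁)v = −i (1 + ζJ₁)v; i.e. (1+ζJ₁) maps the (−i)-eigenspace of J₃ into the (−i)-eigenspace of J(ζ). -/

import Mathlib

/-- `(1 + ζJ₁)` maps the `(-i)`-eigenspace of `J₃` into the `(-i)`-eigenspace of
`J(ζ) = c₁(ζ)J₁ + c₂(ζ)J₂ + c₃(ζ)J₃`. -/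
theorem stmt_4 (W : Type*) [AddCommGroup W] [Module ℂ W]
    (J₁ J₂ J₃ : Module.End ℂ W)
    (h1 : J₁ * J₁ = -1) (h2 : J₂ * J₂ = -1) (h3 : J₃ * J₃ = -1)
    (h12 : J₁ * J₂ = J₃) (h21 : J₂ * J₁ = -J₃)
    (h23 : J₂ * J₃ = J₁) (h32 : J₃ * J₂ = -J₁)
    (h31 : J₃ * J₁ = J₂) (h13 : J₁ * J₃ = -J₂)
    (ζ : ℂ) (c₁ c₂ c₃ : ℝ)
    (hc₁ : c₁ = (1 + ‖ζ‖ ^ 2)⁻¹ * (2 * ζ.im))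
    (hc₂ : c₂ = (1 + ‖ζ‖ ^ 2)⁻¹ * (-2 * ζ.re))
    (hc₃ : c₃ = (1 + ‖ζ‖ ^ 2)⁻¹ * (1 - ‖ζ‖ ^ 2))
    (J : Module.End ℂ W)
    (hJ : J = (c₁ : ℂ) • J₁ + (c₂ : ℂ) • J₂ + (c₃ : ℂ) • J₃)
    (v : W) (hv : J₃ v = -(Complex.I • v)) :
    J (v + ζ • J₁ v) = -(Complex.I • (v + ζ • J₁ v)) := by
  have e11 : J₁ (J₁ v) = -v := by
    have := congrArg (fun f : Module.End ℂ W => f v) h1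
    simpa [Module.End.mul_apply] using this
  have e2 : J₂ v = Complex.I • J₁ v := by
    have := congrArg (fun f : Module.End ℂ W => f v) h13
    simp only [Module.End.mul_apply, LinearMap.neg_apply, hv, map_neg, map_smul] at this
    exact (neg_inj.mp this).symm
  have e31 : J₃ (J₁ v) = Complex.I • J₁ v := by
    have := congrArg (fun f : Module.End ℂ W => f v) h31
    simpa [Module.End.mul_apply, e2] using this
  have e21 : J₂ (J₁ v) = Complex.I • v := by
    have := congrArg (fun f : Module.End ℂ W => f v) h21
    simp only [Module.End.mul_apply, LinearMap.neg_apply, hv] at this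
    simpa using this
  have hd : ((1 : ℂ) + (‖ζ‖ : ℂ) ^ 2) ≠ 0 := by
    have h0 : (0:ℝ) < 1 + ‖ζ‖ ^ 2 := by positivity
    have : ((1 + ‖ζ‖ ^ 2 : ℝ) : ℂ) ≠ 0 := by exact_mod_cast h0.ne'
    simpa using this
  have habsR : (‖ζ‖) ^ 2 = ζ.re ^ 2 + ζ.im ^ 2 := by
    rw [Complex.sq_norm, Complex.normSq_apply]; ring
  have habs : ((‖ζ‖ : ℝ) : ℂ) ^ 2 = (ζ.re : ℂ) ^ 2 + (ζ.im : ℂ) ^ 2 := by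
    exact_mod_cast congrArg (fun x : ℝ => (x : ℂ)) habsR
  have hz : ζ = (ζ.re : ℂ) + (ζ.im : ℂ) * Complex.I := (Complex.re_add_im ζ).symm
  subst hJ
  simp only [LinearMap.add_apply, LinearMap.smul_apply, map_add, map_smul, e11, e2, e21, e31, hv]
  match_scalars <;>
  · rw [hc₁, hc₂, hc₃]
    push_cast
    rw [habs] at hd ⊢
    field_simp
    rw [hz]
    ring_nf
    simp [Complex.I_sq]
    ring
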